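/- Let p ≥ 2, α ≥ 0 and n > 1 - α + α/p; set N := p(n+α)/(p+α). Let ω : (0,∞) → ℝ be differentiable with continuous, never-vanishing derivative ω' on (0,∞), fix γ > 1 and C > 0, and assume that for every s ≥ 1, ∫_s^{γs} t^{-(N-1)}|ω'(t)|^{-p} dt ≤ C · s^{-2√((N-1)/(p-1))}. Define Ĉ_γ := ln γ if N = p+2 and Ĉ_γ := ((p+1)/(p+2-N))·(γ^{(p+2-N)/(p+1)} - 1) if N ≠ p+2. Then for every s ≥ 1, |ω(γs) - ω(s)| ≥ Ĉ_γ^{(p+1)/p} · C^{-1/p} · s^{(1/p)(p+2-N+2√((N-1)/(p-1)))}. Consequently, if u(r) := ω(r^{1+α/p}), then for every r ≥ 1, |u(γ^{p/(p+α)} r) - u(r)| ≥ Ĉ_γ^{(p+1)/p} · C^{-1/p} · r^{N_p(α)}, where N_p(α) := (1/p)(1+α/p)(p+2 - N + 2√((N-1)/(p-1))). -/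

import Mathlib

open Real MeasureTheory

/-- Pointwise lower bound from the integral estimate: if
`∫_s^{γs} t^{-(N-1)}|ω'(t)|^{-p} dt ≤ C s^{-2√((N-1)/(p-1))}` for all `s ≥ 1`, then
`|ω(γs) - ω(s)| ≥ Ĉ_γ^{(p+1)/p} C^{-1/p} s^{(1/p)(p+2-N+2√((N-1)/(p-1)))}`, and
correspondingly for `u(r) = ω(r^{1+α/p})`,
`|u(γ^{p/(p+α)} r) - u(r)| ≥ Ĉ_γ^{(p+1)/p} C^{-1/p} r^{N_p(α)}`. -/
theorem pointwise_lower_bound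
    (p α n : ℝ) (hp : 2 ≤ p) (hα : 0 ≤ α) (hn : 1 - α + α / p < n)
    (N : ℝ) (hN : N = p * (n + α) / (p + α))
    (ω ω' : ℝ → ℝ)
    (hω : ∀ t ∈ Set.Ioi (0 : ℝ), HasDerivAt ω (ω' t) t)
    (hω'cont : ContinuousOn ω' (Set.Ioi 0))
    (hω'ne : ∀ t ∈ Set.Ioi (0 : ℝ), ω' t ≠ 0)
    (γ C : ℝ) (hγ : 1 < γ) (hC : 0 < C)
    (hest : ∀ s : ℝ, 1 ≤ s →
      (∫ t in Set.Ioc s (γ * s), t ^ (-(N - 1)) * |ω' t| ^ (-p)) ≤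
        C * s ^ (-2 * Real.sqrt ((N - 1) / (p - 1))))
    (Chat : ℝ)
    (hChat : Chat = if N = p + 2 then Real.log γ
      else ((p + 1) / (p + 2 - N)) * (γ ^ ((p + 2 - N) / (p + 1)) - 1))
    (u : ℝ → ℝ) (hu : ∀ r : ℝ, u r = ω (r ^ (1 + α / p))) :
    (∀ s : ℝ, 1 ≤ s →
      Chat ^ ((p + 1) / p) * C ^ (-(1 : ℝ) / p) *
          s ^ ((1 / p) * (p + 2 - N + 2 * Real.sqrt ((N - 1) / (p - 1)))) ≤
        |ω (γ * s) - ω s|) ∧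
    (∀ r : ℝ, 1 ≤ r →
      Chat ^ ((p + 1) / p) * C ^ (-(1 : ℝ) / p) *
          r ^ ((1 / p) * (1 + α / p) *
            (p + 2 - N + 2 * Real.sqrt ((N - 1) / (p - 1)))) ≤
        |u (γ ^ (p / (p + α)) * r) - u r|) := by
  have hp0 : (0:ℝ) < p := by linarith
  have hp1 : (0:ℝ) < p + 1 := by linarith
  have hγ0 : (0:ℝ) < γ := by linarith
  set σ : ℝ := Real.sqrt ((N - 1) / (p - 1)) with hσdef
  -- constant sign of ω'
  have hsign : (∀ t ∈ Set.Ioi (0:ℝ), 0 < ω' t) ∨ (∀ t ∈ Set.Ioi (0:ℝ), ω' t < 0) := by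
    have h1mem : (1:ℝ) ∈ Set.Ioi (0:ℝ) := by norm_num
    have key : ∀ t ∈ Set.Ioi (0:ℝ), ∀ t' ∈ Set.Ioi (0:ℝ), ω' t < 0 → ω' t' < 0 := by
      intro t ht t' ht' hneg
      by_contra hle
      push_neg at hle
      have hpos : 0 < ω' t' := lt_of_le_of_ne hle (Ne.symm (hω'ne t' ht'))
      have hsub : Set.uIcc t t' ⊆ Set.Ioi (0:ℝ) := by
        intro x hx
        have := hx.1
        have hmin : 0 < min t t' := lt_min ht ht'
        exact lt_of_lt_of_le hmin this
      have h0mem : (0:ℝ) ∈ Set.uIcc (ω' t) (ω' t') :=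
        Set.Icc_subset_uIcc ⟨hneg.le, hpos.le⟩
      obtain ⟨x, hx, hx0⟩ := intermediate_value_uIcc (hω'cont.mono hsub) h0mem
      exact hω'ne x (hsub hx) hx0
    rcases lt_or_gt_of_ne (hω'ne 1 h1mem) with h1 | h1
    · exact Or.inr (fun t ht => key 1 h1mem t ht h1)
    · left
      intro t ht
      rcases lt_or_gt_of_ne (hω'ne t ht) with h | h
      · exact absurd h1 (not_lt.mpr (key t ht 1 h1mem h).le)
      · exact h
  -- the main pointwise bound for ω
  have key : ∀ s : ℝ, 1 ≤ s →
      Chat ^ ((p + 1) / p) * C ^ (-(1 : ℝ) / p) *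
          s ^ ((1 / p) * (p + 2 - N + 2 * σ)) ≤ |ω (γ * s) - ω s| := by
    intro s hs
    have hs0 : (0:ℝ) < s := by linarith
    have hsγ : s < γ * s := by nlinarith
    have hsubset : Set.Ioc s (γ * s) ⊆ Set.Ioi (0:ℝ) := fun t ht => lt_trans hs0 ht.1
    have hIccsub : Set.Icc s (γ * s) ⊆ Set.Ioi (0:ℝ) := fun t ht => lt_of_lt_of_le hs0 ht.1
    have huIcc : Set.uIcc s (γ * s) = Set.Icc s (γ * s) := Set.uIcc_of_le hsγ.le
    -- FTC
    have hint_ω' : IntervalIntegrable ω' volume s (γ * s) :=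
      (hω'cont.mono (by rw [huIcc]; exact hIccsub)).intervalIntegrable
    have hFTC : ∫ t in Set.Ioc s (γ * s), ω' t = ω (γ * s) - ω s := by
      rw [← intervalIntegral.integral_of_le hsγ.le]
      exact intervalIntegral.integral_eq_sub_of_hasDerivAt
        (fun x hx => hω x (by rw [huIcc] at hx; exact hIccsub hx)) hint_ω'
    set Babs : ℝ := ∫ t in Set.Ioc s (γ * s), |ω' t| with hBabsdef
    have habs : |ω (γ * s) - ω s| = Babs := by
      rw [← hFTC, hBabsdef]
      rcases hsign with hpos | hneg
      · rw [abs_of_nonneg (setIntegral_nonneg measurableSet_Ioc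
          (fun t ht => (hpos t (hsubset ht)).le))]
        exact setIntegral_congr_fun measurableSet_Ioc
          (fun t ht => (abs_of_pos (hpos t (hsubset ht))).symm)
      · rw [abs_of_nonpos (setIntegral_nonpos measurableSet_Ioc
          (fun t ht => (hneg t (hsubset ht)).le)), ← integral_neg]
        exact setIntegral_congr_fun measurableSet_Ioc
          (fun t ht => (abs_of_neg (hneg t (hsubset ht))).symm)
    -- Hölder's inequality setup
    haveI hfin : IsFiniteMeasure (volume.restrict (Set.Ioc s (γ * s))) := by
      constructor
      rw [Measure.restrict_apply_univ, Real.volume_Ioc]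
      exact ENNReal.ofReal_lt_top
    set F : ℝ → ℝ := fun t => t ^ (-(N - 1) / (p + 1)) * |ω' t| ^ (-p / (p + 1)) with hFdef
    set G : ℝ → ℝ := fun t => |ω' t| ^ (p / (p + 1)) with hGdef
    have hcontF : ContinuousOn F (Set.Icc s (γ * s)) := by
      apply ContinuousOn.mul
      · exact ContinuousOn.rpow_const continuousOn_id
          (fun t ht => Or.inl (ne_of_gt (hIccsub ht)))
      · exact ContinuousOn.rpow_const (hω'cont.mono hIccsub).abs
          (fun t ht => Or.inl (abs_ne_zero.2 (hω'ne t (hIccsub ht))))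
    have hcontG : ContinuousOn G (Set.Icc s (γ * s)) :=
      ContinuousOn.rpow_const (hω'cont.mono hIccsub).abs
        (fun t ht => Or.inl (abs_ne_zero.2 (hω'ne t (hIccsub ht))))
    obtain ⟨MF, hMF⟩ := isCompact_Icc.exists_bound_of_continuousOn hcontF
    obtain ⟨MG, hMG⟩ := isCompact_Icc.exists_bound_of_continuousOn hcontG
    have hmemF : MemLp F (ENNReal.ofReal (p + 1)) (volume.restrict (Set.Ioc s (γ * s))) :=
      MemLp.of_bound ((hcontF.mono Set.Ioc_subset_Icc_self).aestronglyMeasurable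
        measurableSet_Ioc) MF
        (by filter_upwards [ae_restrict_mem measurableSet_Ioc] with t ht using
          hMF t (Set.Ioc_subset_Icc_self ht))
    have hmemG : MemLp G (ENNReal.ofReal ((p + 1) / p)) (volume.restrict (Set.Ioc s (γ * s))) :=
      MemLp.of_bound ((hcontG.mono Set.Ioc_subset_Icc_self).aestronglyMeasurable
        measurableSet_Ioc) MG
        (by filter_upwards [ae_restrict_mem measurableSet_Ioc] with t ht using
          hMG t (Set.Ioc_subset_Icc_self ht))
    have hconj : (p + 1).HolderConjugate ((p + 1) / p) := by
      rw [Real.holderConjugate_iff_eq_conjExponent (by linarith)]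
      congr 1
      ring
    have hFnn : 0 ≤ᵐ[volume.restrict (Set.Ioc s (γ * s))] F := by
      filter_upwards [ae_restrict_mem measurableSet_Ioc] with t ht
      exact mul_nonneg (Real.rpow_nonneg (hsubset ht).le _)
        (Real.rpow_nonneg (abs_nonneg _) _)
    have hGnn : 0 ≤ᵐ[volume.restrict (Set.Ioc s (γ * s))] G :=
      Filter.Eventually.of_forall (fun t => Real.rpow_nonneg (abs_nonneg _) _)
    have holder := MeasureTheory.integral_mul_le_Lp_mul_Lq_of_nonneg hconj hFnn hGnn hmemF hmemG
    -- identify the three integrals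
    have hFG : ∫ t in Set.Ioc s (γ * s), F t * G t
        = ∫ t in Set.Ioc s (γ * s), t ^ (-(N - 1) / (p + 1)) := by
      refine setIntegral_congr_fun measurableSet_Ioc (fun t ht => ?_)
      have hw : 0 < |ω' t| := abs_pos.2 (hω'ne t (hsubset ht))
      show t ^ (-(N - 1) / (p + 1)) * |ω' t| ^ (-p / (p + 1)) * |ω' t| ^ (p / (p + 1))
        = t ^ (-(N - 1) / (p + 1))
      rw [mul_assoc, ← Real.rpow_add hw, show -p / (p + 1) + p / (p + 1) = 0 by ring,
        Real.rpow_zero, mul_one]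
    have hFp : ∫ t in Set.Ioc s (γ * s), F t ^ (p + 1)
        = ∫ t in Set.Ioc s (γ * s), t ^ (-(N - 1)) * |ω' t| ^ (-p) := by
      refine setIntegral_congr_fun measurableSet_Ioc (fun t ht => ?_)
      have ht0 : (0:ℝ) < t := hsubset ht
      have hw : 0 < |ω' t| := abs_pos.2 (hω'ne t (hsubset ht))
      show (t ^ (-(N - 1) / (p + 1)) * |ω' t| ^ (-p / (p + 1))) ^ (p + 1)
        = t ^ (-(N - 1)) * |ω' t| ^ (-p)
      rw [Real.mul_rpow (Real.rpow_nonneg ht0.le _) (Real.rpow_nonneg hw.le _),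
        ← Real.rpow_mul ht0.le, ← Real.rpow_mul hw.le,
        div_mul_cancel₀ _ (ne_of_gt hp1), div_mul_cancel₀ _ (ne_of_gt hp1)]
    have hGq : ∫ t in Set.Ioc s (γ * s), G t ^ ((p + 1) / p)
        = ∫ t in Set.Ioc s (γ * s), |ω' t| := by
      refine setIntegral_congr_fun measurableSet_Ioc (fun t ht => ?_)
      have hw : 0 < |ω' t| := abs_pos.2 (hω'ne t (hsubset ht))
      show (|ω' t| ^ (p / (p + 1))) ^ ((p + 1) / p) = |ω' t|
      rw [← Real.rpow_mul hw.le,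
        show p / (p + 1) * ((p + 1) / p) = 1 by
          field_simp, Real.rpow_one]
    -- compute the power integral
    have hI : ∫ t in Set.Ioc s (γ * s), t ^ (-(N - 1) / (p + 1))
        = Chat * s ^ ((p + 2 - N) / (p + 1)) := by
      rw [← intervalIntegral.integral_of_le hsγ.le]
      by_cases hNc : N = p + 2
      · rw [hChat, if_pos hNc, hNc]
        have hone : -((p + 2 : ℝ) - 1) / (p + 1) = -1 := by
          rw [div_eq_iff (ne_of_gt hp1)]; ring
        have hzero : ((p : ℝ) + 2 - (p + 2)) / (p + 1) = 0 := by
          rw [div_eq_iff (ne_of_gt hp1)]; ring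
        rw [hone, hzero, Real.rpow_zero, mul_one]
        simp_rw [Real.rpow_neg_one]
        rw [integral_inv_of_pos hs0 (by nlinarith), mul_div_assoc,
          div_self (ne_of_gt hs0), mul_one]
      · rw [hChat, if_neg hNc]
        have hd : (p : ℝ) + 2 - N ≠ 0 := fun h => hNc (by linarith)
        have hrne : -(N - 1) / (p + 1) ≠ -1 := by
          intro h
          rw [div_eq_iff (ne_of_gt hp1)] at h
          exact hd (by linarith)
        rw [integral_rpow (Or.inr ⟨hrne, Set.notMem_uIcc_of_lt hs0 (by nlinarith)⟩)]
        have hr1 : -(N - 1) / (p + 1) + 1 = (p + 2 - N) / (p + 1) := by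
          rw [div_add' _ _ _ (ne_of_gt hp1)]; ring_nf
        rw [hr1, Real.mul_rpow hγ0.le hs0.le]
        field_simp
    -- positivity of the power integral
    have hIint : IntegrableOn (fun t : ℝ => t ^ (-(N - 1) / (p + 1))) (Set.Ioc s (γ * s)) := by
      refine IntegrableOn.mono_set ?_ Set.Ioc_subset_Icc_self
      exact (ContinuousOn.rpow_const continuousOn_id
        (fun t ht => Or.inl (ne_of_gt (hIccsub ht)))).integrableOn_Icc
    have hIpos : 0 < ∫ t in Set.Ioc s (γ * s), t ^ (-(N - 1) / (p + 1)) := by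
      rw [setIntegral_pos_iff_support_of_nonneg_ae ?_ hIint]
      · refine lt_of_lt_of_le ?_ (measure_mono (fun t ht =>
          ⟨ne_of_gt (Real.rpow_pos_of_pos (hsubset ht) _), ht⟩))
        rw [Real.volume_Ioc]
        exact ENNReal.ofReal_pos.2 (by linarith)
      · filter_upwards [ae_restrict_mem measurableSet_Ioc] with t ht using
          (Real.rpow_pos_of_pos (hsubset ht) _).le
    have hse : (0:ℝ) < s ^ ((p + 2 - N) / (p + 1)) := Real.rpow_pos_of_pos hs0 _
    have hChat0 : 0 < Chat := by
      rw [hI] at hIpos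
      nlinarith
    -- combine
    set A : ℝ := ∫ t in Set.Ioc s (γ * s), t ^ (-(N - 1)) * |ω' t| ^ (-p) with hAdef
    have hA0 : 0 ≤ A :=
      setIntegral_nonneg measurableSet_Ioc (fun t ht =>
        mul_nonneg (Real.rpow_nonneg (hsubset ht).le _) (Real.rpow_nonneg (abs_nonneg _) _))
    have hB0 : 0 ≤ Babs :=
      setIntegral_nonneg measurableSet_Ioc (fun t _ => abs_nonneg _)
    rw [hFG, hFp, hGq, ← hBabsdef, one_div_div] at holder
    set D : ℝ := C * s ^ (-2 * σ) with hDdef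
    have hD0 : 0 < D := mul_pos hC (Real.rpow_pos_of_pos hs0 _)
    have hAD : A ≤ D := hest s hs
    have h1 : (∫ t in Set.Ioc s (γ * s), t ^ (-(N - 1) / (p + 1)))
        ≤ D ^ (1 / (p + 1)) * Babs ^ (p / (p + 1)) := by
      refine le_trans holder ?_
      gcongr
    have h2 : (Chat * s ^ ((p + 2 - N) / (p + 1))) ^ ((p + 1) / p)
        ≤ D ^ (1 / p) * Babs := by
      rw [← hI]
      calc (∫ t in Set.Ioc s (γ * s), t ^ (-(N - 1) / (p + 1))) ^ ((p + 1) / p)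
          ≤ (D ^ (1 / (p + 1)) * Babs ^ (p / (p + 1))) ^ ((p + 1) / p) :=
            Real.rpow_le_rpow hIpos.le h1 (by positivity)
        _ = D ^ (1 / p) * Babs := by
            rw [Real.mul_rpow (Real.rpow_nonneg hD0.le _) (Real.rpow_nonneg hB0 _),
              ← Real.rpow_mul hD0.le, ← Real.rpow_mul hB0,
              show 1 / (p + 1) * ((p + 1) / p) = 1 / p by field_simp,
              show p / (p + 1) * ((p + 1) / p) = 1 by field_simp,
              Real.rpow_one]
    have h3 : (Chat * s ^ ((p + 2 - N) / (p + 1))) ^ ((p + 1) / p) * D ^ (-(1:ℝ) / p)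
        ≤ Babs := by
      have hmul := mul_le_mul_of_nonneg_right h2
        (Real.rpow_nonneg hD0.le (-(1:ℝ) / p))
      calc (Chat * s ^ ((p + 2 - N) / (p + 1))) ^ ((p + 1) / p) * D ^ (-(1:ℝ) / p)
          ≤ D ^ (1 / p) * Babs * D ^ (-(1:ℝ) / p) := hmul
        _ = Babs := by
            rw [mul_right_comm, ← Real.rpow_add hD0,
              show 1 / p + -(1:ℝ) / p = 0 by ring, Real.rpow_zero, one_mul]
    rw [habs]
    refine le_trans (le_of_eq ?_) h3
    rw [hDdef, Real.mul_rpow hChat0.le hse.le, Real.mul_rpow hC.le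
      (Real.rpow_nonneg hs0.le _), ← Real.rpow_mul hs0.le, ← Real.rpow_mul hs0.le,
      show (1 / p) * (p + 2 - N + 2 * σ)
        = (p + 2 - N) / (p + 1) * ((p + 1) / p) + -2 * σ * (-(1:ℝ) / p) by
          field_simp,
      Real.rpow_add hs0]
    ring
  refine ⟨key, ?_⟩
  intro r hr
  have hr0 : (0:ℝ) < r := by linarith
  have hpα : (0:ℝ) < p + α := by linarith
  have hβ : (0:ℝ) ≤ 1 + α / p := by positivity
  have hs1 : 1 ≤ r ^ (1 + α / p) := by
    simpa using Real.rpow_le_rpow_of_exponent_le hr hβ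
  have hbound := key (r ^ (1 + α / p)) hs1
  have harg : (γ ^ (p / (p + α)) * r) ^ (1 + α / p) = γ * r ^ (1 + α / p) := by
    rw [Real.mul_rpow (Real.rpow_nonneg hγ0.le _) hr0.le, ← Real.rpow_mul hγ0.le,
      show p / (p + α) * (1 + α / p) = 1 by field_simp, Real.rpow_one]
  rw [hu, hu, harg]
  rw [← Real.rpow_mul hr0.le,
    show (1 + α / p) * ((1 / p) * (p + 2 - N + 2 * σ))
      = (1 / p) * (1 + α / p) * (p + 2 - N + 2 * σ) by ring] at hbound
  exact hbound
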